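/- arXiv:0709.0311 — 2 statements merged into one kernel-verified Lean document; each statement's English description precedes it below -/
import Mathlib

section
/- Let A be an (n+1)×(n+1) orthogonal-type block matrix of the form diag(1, A*) where A* ∈ O(n) has finite order at most k and A ≠ I. Then ‖A − I‖ ≥ 2 sin(π/k). -/
open Matrix
noncomputable def opNorm {m : Type*} [Fintype m] [DecidableEq m]
    (A : Matrix m m ℝ) : ℝ :=
  ‖(LinearMap.toContinuousLinearMap (Matrix.toEuclideanLin A))‖

open Polynomial in
lemma aux_isUnit_aeval_prod {ι : Type*} [Fintype ι] [DecidableEq ι]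
    (B : Matrix ι ι ℂ) (s : Finset ℂ) (h : ∀ ζ ∈ s, IsUnit (B - ζ • 1)) :
    IsUnit ((aeval B) (∏ ζ ∈ s, (X - C ζ))) := by
  classical
  induction s using Finset.induction with
  | empty => simp
  | @insert a s ha ih =>
    rw [Finset.prod_insert ha, _root_.map_mul]
    have h1 : (aeval B) (X - C a) = B - a • 1 := by
      simp [Algebra.algebraMap_eq_smul_one]
    rw [h1]
    exact (h a (Finset.mem_insert_self a s)).mul
      (ih fun ζ hζ => h ζ (Finset.mem_insert_of_mem hζ))

lemma aux_trig {cθ sθ d : ℝ} (hpy : sθ ^ 2 + cθ ^ 2 = 1)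
    (hc : cθ ≤ 1 - 2 * d ^ 2) : (2 * d) ^ 2 ≤ (cθ - 1) ^ 2 + sθ ^ 2 := by
  nlinarith

open Polynomial in
lemma aux_exists_eigenvector {ι : Type*} [Fintype ι] [DecidableEq ι]
    {B : Matrix ι ι ℂ} {k' : ℕ} (hk : 1 ≤ k') (hB : B ^ k' = 1) (hne : B ≠ 1) :
    ∃ (ζ : ℂ) (z : ι → ℂ), ζ ≠ 1 ∧ ζ ^ k' = 1 ∧ z ≠ 0 ∧ B *ᵥ z = ζ • z := by
  classical
  by_contra hcon
  push_neg at hcon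
  apply hne
  have hprim := Complex.isPrimitiveRoot_exp k' (by omega)
  have hfact : (X ^ k' - 1 : ℂ[X])
      = (X - C 1) * ∏ ζ ∈ (nthRootsFinset k' (1 : ℂ)).erase 1, (X - C ζ) := by
    rw [X_pow_sub_one_eq_prod (by omega) hprim,
      ← Finset.mul_prod_erase _ _ (one_mem_nthRootsFinset (by omega))]
  have hunit : IsUnit ((aeval B) (∏ ζ ∈ (nthRootsFinset k' (1 : ℂ)).erase 1, (X - C ζ))) := by
    apply aux_isUnit_aeval_prod
    intro ζ hζ
    obtain ⟨hζ1, hζmem⟩ := Finset.mem_erase.mp hζ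
    have hζk : ζ ^ k' = 1 := (mem_nthRootsFinset (by omega) _).mp hζmem
    rw [Matrix.isUnit_iff_isUnit_det, isUnit_iff_ne_zero]
    intro hdet
    obtain ⟨z, hz0, hz⟩ := (Matrix.exists_mulVec_eq_zero_iff).mpr hdet
    refine hcon ζ z hζ1 hζk hz0 ?_
    rw [Matrix.sub_mulVec, Matrix.smul_mulVec, Matrix.one_mulVec,
      sub_eq_zero] at hz
    exact hz
  have h0 : (aeval B) (X ^ k' - 1 : ℂ[X]) = 0 := by
    simp [hB]
  rw [hfact, _root_.map_mul] at h0
  have h1 : (aeval B) (X - C 1 : ℂ[X]) = B - 1 := by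
    simp [Algebra.algebraMap_eq_smul_one]
  rw [h1, hunit.mul_left_eq_zero] at h0
  exact sub_eq_zero.mp h0

set_option maxHeartbeats 1000000 in
theorem stmt_3 (n k : ℕ) (hk : 1 ≤ k)
    (Astar : Matrix (Fin n) (Fin n) ℝ)
    (hO : Astarᵀ * Astar = 1)
    (A : Matrix (Fin 1 ⊕ Fin n) (Fin 1 ⊕ Fin n) ℝ)
    (hA : A = Matrix.fromBlocks 1 0 0 Astar)
    (hAne : A ≠ 1)
    (hord : ∃ k', 1 ≤ k' ∧ k' ≤ k ∧ A ^ k' = 1) :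
    2 * Real.sin (Real.pi / k) ≤ opNorm (A - 1) := by
  classical
  obtain ⟨k', hk'1, hk'k, hAk⟩ := hord
  set f := (Complex.ofRealHom.mapMatrix :
    Matrix (Fin 1 ⊕ Fin n) (Fin 1 ⊕ Fin n) ℝ →+* Matrix (Fin 1 ⊕ Fin n) (Fin 1 ⊕ Fin n) ℂ) with hf
  set B := f A with hB
  have hBk : B ^ k' = 1 := by rw [hB, ← map_pow, hAk, _root_.map_one]
  have hBne : B ≠ 1 := by
    intro h
    apply hAne
    have hinj : Function.Injective f := by
      intro M N hMN
      ext i j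
      have h2 : f M i j = f N i j := congrFun (congrFun hMN i) j
      simp only [hf, RingHom.mapMatrix_apply, Matrix.map_apply,
        Complex.ofRealHom_eq_coe] at h2
      exact_mod_cast h2
    have hf1 : f A = f 1 := by rw [_root_.map_one, ← h]
    exact hinj hf1
  obtain ⟨ζ, z, hζ1, hζk, hz0, hz⟩ := aux_exists_eigenvector hk'1 hBk hBne
  set x := ζ.re with hxdef
  set y := ζ.im with hydef
  set u : (Fin 1 ⊕ Fin n) → ℝ := fun i => (z i).re with hudef
  set v : (Fin 1 ⊕ Fin n) → ℝ := fun i => (z i).im with hvdef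
  -- componentwise equations
  have hC : ∀ i, ∑ j, (A i j : ℂ) * z j = ζ * z i := by
    intro i
    have := congrFun hz i
    simpa [Matrix.mulVec, dotProduct, hB, hf, RingHom.mapMatrix_apply,
      Matrix.map_apply] using this
  have hre : ∀ i, (A *ᵥ u) i = x * u i - y * v i := by
    intro i
    have h := congrArg Complex.re (hC i)
    rw [Complex.re_sum] at h
    simp only [Complex.mul_re, Complex.ofReal_re, Complex.ofReal_im, zero_mul,
      sub_zero] at h
    simpa [Matrix.mulVec, dotProduct, hudef, hvdef, hxdef, hydef] using h
  have him : ∀ i, (A *ᵥ v) i = x * v i + y * u i := by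
    intro i
    have h := congrArg Complex.im (hC i)
    rw [Complex.im_sum] at h
    simp only [Complex.mul_im, Complex.ofReal_re, Complex.ofReal_im, zero_mul,
      add_zero] at h
    simpa [Matrix.mulVec, dotProduct, hudef, hvdef, hxdef, hydef] using h
  -- Euclidean space setup
  set uE : EuclideanSpace ℝ (Fin 1 ⊕ Fin n) := (WithLp.equiv 2 ((Fin 1 ⊕ Fin n) → ℝ)).symm u with huE
  set vE : EuclideanSpace ℝ (Fin 1 ⊕ Fin n) := (WithLp.equiv 2 ((Fin 1 ⊕ Fin n) → ℝ)).symm v with hvE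
  set T := LinearMap.toContinuousLinearMap (Matrix.toEuclideanLin (A - 1)) with hT
  have hTu : T uE = (x - 1) • uE - y • vE := by
    apply (WithLp.equiv 2 ((Fin 1 ⊕ Fin n) → ℝ)).injective
    simp only [hT, LinearMap.coe_toContinuousLinearMap',
      WithLp.equiv_apply, Matrix.ofLp_toEuclideanLin_apply, WithLp.ofLp_sub, WithLp.ofLp_smul,
      huE, hvE, WithLp.equiv_symm_apply, WithLp.ofLp_toLp]
    funext i
    simp only [Matrix.sub_mulVec, Matrix.one_mulVec, Pi.sub_apply, Pi.smul_apply,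
      smul_eq_mul]
    rw [hre i]; ring
  have hTv : T vE = y • uE + (x - 1) • vE := by
    apply (WithLp.equiv 2 ((Fin 1 ⊕ Fin n) → ℝ)).injective
    simp only [hT, LinearMap.coe_toContinuousLinearMap',
      WithLp.equiv_apply, Matrix.ofLp_toEuclideanLin_apply, WithLp.ofLp_add, WithLp.ofLp_smul,
      huE, hvE, WithLp.equiv_symm_apply, WithLp.ofLp_toLp]
    funext i
    simp only [Matrix.sub_mulVec, Matrix.one_mulVec, Pi.sub_apply, Pi.add_apply,
      Pi.smul_apply, smul_eq_mul]
    rw [him i]; ring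
  have hSnn : (0:ℝ) ≤ ‖T‖ := norm_nonneg _
  have h1 : ‖T uE‖ ^ 2 ≤ ‖T‖ ^ 2 * ‖uE‖ ^ 2 := by
    have := T.le_opNorm uE
    nlinarith [norm_nonneg (T uE), norm_nonneg uE]
  have h2 : ‖T vE‖ ^ 2 ≤ ‖T‖ ^ 2 * ‖vE‖ ^ 2 := by
    have := T.le_opNorm vE
    nlinarith [norm_nonneg (T vE), norm_nonneg vE]
  have e1 : ‖T uE‖ ^ 2 = (x-1)^2 * ‖uE‖^2 - 2*((x-1)*y)*(inner ℝ uE vE : ℝ) + y^2 * ‖vE‖^2 := by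
    rw [hTu, norm_sub_sq_real, real_inner_smul_left, real_inner_smul_right,
      norm_smul, norm_smul]
    simp only [Real.norm_eq_abs, mul_pow, sq_abs]
    ring
  have e2 : ‖T vE‖ ^ 2 = y^2 * ‖uE‖^2 + 2*((x-1)*y)*(inner ℝ uE vE : ℝ) + (x-1)^2 * ‖vE‖^2 := by
    rw [hTv, norm_add_sq_real, real_inner_smul_left, real_inner_smul_right,
      norm_smul, norm_smul]
    simp only [Real.norm_eq_abs, mul_pow, sq_abs]
    ring
  have hpos : 0 < ‖uE‖^2 + ‖vE‖^2 := by
    rcases (norm_nonneg uE).lt_or_eq with h | h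
    · nlinarith [norm_nonneg vE]
    rcases (norm_nonneg vE).lt_or_eq with h' | h'
    · nlinarith [norm_nonneg uE]
    exfalso
    apply hz0
    have hu0 : uE = 0 := norm_eq_zero.mp h.symm
    have hv0 : vE = 0 := norm_eq_zero.mp h'.symm
    funext i
    have hui : u i = 0 := congrFun (congrArg (WithLp.equiv 2 ((Fin 1 ⊕ Fin n) → ℝ)) hu0) i
    have hvi : v i = 0 := congrFun (congrArg (WithLp.equiv 2 ((Fin 1 ⊕ Fin n) → ℝ)) hv0) i
    exact Complex.ext hui hvi
  have hkey : (x-1)^2 + y^2 ≤ ‖T‖^2 := by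
    have hsum : ((x-1)^2 + y^2) * (‖uE‖^2 + ‖vE‖^2) ≤ ‖T‖^2 * (‖uE‖^2 + ‖vE‖^2) := by
      nlinarith [h1, h2, e1, e2]
    exact le_of_mul_le_mul_right hsum hpos
  -- trigonometry
  have hπ := Real.pi_pos
  have habs : ‖ζ‖ = 1 := by
    have hp : ‖ζ‖ ^ k' = 1 := by rw [← norm_pow, hζk]; simp
    have hk'0 : k' ≠ 0 := by omega
    rcases lt_trichotomy (‖ζ‖) 1 with h | h | h
    · exfalso
      have hlt := pow_lt_one₀ (norm_nonneg ζ) h hk'0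
      rw [hp] at hlt; exact lt_irrefl _ hlt
    · exact h
    · exfalso
      have hlt := one_lt_pow₀ h hk'0
      rw [hp] at hlt; exact lt_irrefl _ hlt
  set θ := Complex.arg ζ with hθdef
  have hζexp : ζ = Complex.exp (θ * Complex.I) := by
    have := Complex.norm_mul_exp_arg_mul_I ζ
    rw [habs] at this
    simpa using this.symm
  have hx : x = Real.cos θ := by
    rw [hxdef, hζexp]; exact Complex.exp_ofReal_mul_I_re θ
  have hy : y = Real.sin θ := by
    rw [hydef, hζexp]; exact Complex.exp_ofReal_mul_I_im θ
  have hexpk : Complex.exp ((k' : ℂ) * (θ * Complex.I)) = 1 := by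
    rw [Complex.exp_nat_mul, ← hζexp, hζk]
  obtain ⟨m, hm⟩ := Complex.exp_eq_one_iff.mp hexpk
  have hreal : (k' : ℝ) * θ = m * (2 * Real.pi) := by
    have h' : (((k' : ℝ) * θ : ℝ) : ℂ) * Complex.I = (((m : ℝ) * (2 * Real.pi) : ℝ) : ℂ) * Complex.I := by
      push_cast
      push_cast at hm
      linear_combination hm
    have := mul_right_cancel₀ Complex.I_ne_zero h'
    exact_mod_cast this
  have hk'pos : (0:ℝ) < k' := by positivity
  have hθeq : θ = m * (2 * Real.pi) / k' := by
    field_simp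
    linarith [hreal]
  have hm0 : m ≠ 0 := by
    intro h
    apply hζ1
    rw [hθeq, h] at hζexp
    simp at hζexp
    exact hζexp
  have habsθ : 2 * Real.pi / k ≤ |θ| := by
    have h1le : (1:ℝ) ≤ |(m:ℝ)| := by
      have := Int.one_le_abs hm0
      exact_mod_cast (by exact_mod_cast this : (1:ℝ) ≤ ((|m| : ℤ) : ℝ))
    have hθabs : |θ| = |(m:ℝ)| * (2 * Real.pi) / k' := by
      rw [hθeq, abs_div, abs_mul]
      rw [abs_of_pos (by positivity : (0:ℝ) < 2 * Real.pi),
        abs_of_pos hk'pos]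
    have hkpos : (0:ℝ) < k := by positivity
    have step1 : 2 * Real.pi / k ≤ 2 * Real.pi / k' := by
      apply div_le_div_of_nonneg_left (by positivity) hk'pos
      exact_mod_cast hk'k
    have step2 : 2 * Real.pi / k' ≤ |(m:ℝ)| * (2 * Real.pi) / k' := by
      rw [div_le_div_iff_of_pos_right hk'pos]
      nlinarith [h1le, hπ]
    rw [hθabs]
    linarith
  have hθpi : |θ| ≤ Real.pi := Complex.abs_arg_le_pi ζ
  have hcos : Real.cos θ ≤ Real.cos (2 * Real.pi / k) := by
    rw [← Real.cos_abs]
    exact Real.cos_le_cos_of_nonneg_of_le_pi (by positivity) hθpi habsθ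
  have hsin_nonneg : 0 ≤ Real.sin (Real.pi / k) := by
    apply Real.sin_nonneg_of_nonneg_of_le_pi (by positivity)
    apply div_le_self hπ.le
    exact_mod_cast hk
  have hdouble : Real.cos (2 * (Real.pi / k)) = 1 - 2 * Real.sin (Real.pi / k) ^ 2 := by
    linarith [Real.cos_two_mul (Real.pi / k), Real.sin_sq_add_cos_sq (Real.pi / k)]
  have h4 : (2 * Real.sin (Real.pi / k)) ^ 2 ≤ (x-1)^2 + y^2 := by
    rw [hx, hy]
    have h2pik : 2 * Real.pi / (k:ℝ) = 2 * (Real.pi / k) := by ring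
    rw [h2pik, hdouble] at hcos
    exact aux_trig (Real.sin_sq_add_cos_sq θ) hcos
  -- conclude
  have hfin : (2 * Real.sin (Real.pi / k)) ^ 2 ≤ ‖T‖ ^ 2 := le_trans h4 hkey
  have : 2 * Real.sin (Real.pi / k) = Real.sqrt ((2 * Real.sin (Real.pi / k))^2) := by
    rw [Real.sqrt_sq (by positivity)]
  rw [this]
  calc Real.sqrt ((2 * Real.sin (Real.pi / k))^2) ≤ Real.sqrt (‖T‖^2) :=
        Real.sqrt_le_sqrt hfin
    _ = ‖T‖ := Real.sqrt_sq hSnn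
end

section
/- Let r > 0. If A ∈ O⁺(1,n) satisfies A(B̄(e₁,r)) ∩ B̄(e₁,r) ≠ ∅ (where B̄ denotes a closed hyperbolic ball), then every entry of A satisfies |a_{ij}| ≤ ((1+cosh r)/sinh r)·√(cosh 6r). -/
open Matrix

/-- The Lorentz form matrix `J = diag(-1, 1, …, 1)`. -/
noncomputable def Jmat (n : ℕ) : Matrix (Fin (n+1)) (Fin (n+1)) ℝ :=
  Matrix.diagonal fun i => if i = 0 then (-1 : ℝ) else 1

/-- `A ∈ O⁺(1,n)`: `A` preserves the Lorentz form and the upper sheet. -/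
def OPlus {n : ℕ} (A : Matrix (Fin (n+1)) (Fin (n+1)) ℝ) : Prop :=
  Aᵀ * Jmat n * A = Jmat n ∧ 1 ≤ A 0 0

/-- The Lorentzian pairing `x₁y₁ − x₂y₂ − ⋯ − x_{n+1}y_{n+1}`. -/
noncomputable def lprod {n : ℕ} (x y : Fin (n+1) → ℝ) : ℝ :=
  x 0 * y 0 - ∑ i ∈ Finset.univ.erase 0, x i * y i

/-- Membership in the hyperboloid model `H^n` (upper sheet). -/
def onH {n : ℕ} (x : Fin (n+1) → ℝ) : Prop :=
  lprod x x = 1 ∧ 0 < x 0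

/-- Inverse hyperbolic cosine. -/
noncomputable def arcosh (x : ℝ) : ℝ := Real.log (x + Real.sqrt (x ^ 2 - 1))

/-- Hyperbolic distance on the hyperboloid: `cosh (dH x y) = lprod x y`. -/
noncomputable def dH {n : ℕ} (x y : Fin (n+1) → ℝ) : ℝ := arcosh (lprod x y)

/-- The point `e₁ = (1, 0, …, 0)` of the hyperboloid. -/
noncomputable def e1vec (n : ℕ) : Fin (n+1) → ℝ := fun i => if i = 0 then 1 else 0

/-- The closed hyperbolic ball of radius `r` about `e₁` in the hyperboloid. -/
noncomputable def hBall (n : ℕ) (r : ℝ) : Set (Fin (n+1) → ℝ) :=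
  {x | onH x ∧ dH (e1vec n) x ≤ r}

/-- `κ(r) = ((1 + cosh r)/sinh r) √(cosh 6r)`. -/
noncomputable def kappa (r : ℝ) : ℝ :=
  ((1 + Real.cosh r) / Real.sinh r) * Real.sqrt (Real.cosh (6 * r))


section auxLemmas
variable {n : ℕ}

lemma lprod_symm (x y : Fin (n+1) → ℝ) : lprod x y = lprod y x := by
  unfold lprod
  rw [mul_comm]
  congr 1
  exact Finset.sum_congr rfl fun i _ => mul_comm _ _

lemma lprod_sub_smul (u v w : Fin (n+1) → ℝ) (a b : ℝ) :
    lprod (fun i => u i - a * v i) (fun i => w i - b * v i)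
      = lprod u w - b * lprod u v - a * lprod v w + a * b * lprod v v := by
  unfold lprod
  rw [Finset.sum_congr rfl (fun i _ => (by ring :
    (u i - a * v i) * (w i - b * v i)
      = (u i * w i - b * (u i * v i)) - (a * (v i * w i) - a * b * (v i * v i))))]
  rw [Finset.sum_sub_distrib, Finset.sum_sub_distrib, Finset.sum_sub_distrib,
    ← Finset.mul_sum, ← Finset.mul_sum, ← Finset.mul_sum]
  ring

lemma lprod_add_smul_right (v p q : Fin (n+1) → ℝ) (t : ℝ) :
    lprod v (fun i => p i + t * q i) = lprod v p + t * lprod v q := by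
  unfold lprod
  rw [Finset.sum_congr rfl (fun i _ => (by ring :
    v i * (p i + t * q i) = v i * p i + t * (v i * q i)))]
  rw [Finset.sum_add_distrib, ← Finset.mul_sum]
  ring

lemma lprod_self_add_smul (p q : Fin (n+1) → ℝ) (t : ℝ) :
    lprod (fun i => p i + t * q i) (fun i => p i + t * q i)
      = lprod p p + 2 * t * lprod p q + t ^ 2 * lprod q q := by
  unfold lprod
  rw [Finset.sum_congr rfl (fun i _ => (by ring :
    (p i + t * q i) * (p i + t * q i)
      = (p i * p i + 2 * t * (p i * q i)) + t ^ 2 * (q i * q i)))]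
  rw [Finset.sum_add_distrib, Finset.sum_add_distrib, ← Finset.mul_sum, ← Finset.mul_sum]
  ring

lemma dot_J (x y : Fin (n+1) → ℝ) : x ⬝ᵥ (Jmat n).mulVec y = - lprod x y := by
  unfold Jmat lprod
  rw [dotProduct,
    ← Finset.add_sum_erase Finset.univ _ (Finset.mem_univ (0 : Fin (n+1))),
    Finset.sum_congr rfl (fun i hi => by
      rw [Matrix.mulVec_diagonal, if_neg (Finset.mem_erase.mp hi).1, one_mul]),
    Matrix.mulVec_diagonal, if_pos rfl]
  ring

lemma lprod_mulVec (A : Matrix (Fin (n+1)) (Fin (n+1)) ℝ)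
    (hA : Aᵀ * Jmat n * A = Jmat n) (x y : Fin (n+1) → ℝ) :
    lprod (A.mulVec x) (A.mulVec y) = lprod x y := by
  have key : (A.mulVec x) ⬝ᵥ (Jmat n).mulVec (A.mulVec y) = x ⬝ᵥ (Jmat n).mulVec y := by
    rw [Matrix.mulVec_mulVec,
      show A.mulVec x = Matrix.vecMul x Aᵀ from (Matrix.vecMul_transpose A x).symm,
      Matrix.dotProduct_mulVec, Matrix.vecMul_vecMul, ← Matrix.mul_assoc, hA,
      ← Matrix.dotProduct_mulVec]
  have h1 := dot_J (n := n) (A.mulVec x) (A.mulVec y)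
  have h2 := dot_J (n := n) x y
  rw [key] at h1
  linarith

lemma J_mul_J : Jmat n * Jmat n = 1 := by
  unfold Jmat
  rw [Matrix.diagonal_mul_diagonal]
  have : (fun i : Fin (n+1) => (if i = 0 then (-1:ℝ) else 1) * (if i = 0 then (-1:ℝ) else 1))
      = fun _ => (1:ℝ) := funext fun i => by by_cases h : i = 0 <;> simp [h]
  rw [this, Matrix.diagonal_one]

lemma AJAT (A : Matrix (Fin (n+1)) (Fin (n+1)) ℝ)
    (hA : Aᵀ * Jmat n * A = Jmat n) : A * Jmat n * Aᵀ = Jmat n := by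
  have h1 : (Jmat n * Aᵀ * Jmat n) * A = 1 := by
    calc (Jmat n * Aᵀ * Jmat n) * A = Jmat n * (Aᵀ * Jmat n * A) := by
          simp only [Matrix.mul_assoc]
      _ = 1 := by rw [hA, J_mul_J]
  have h2 : A * (Jmat n * Aᵀ * Jmat n) = 1 := mul_eq_one_comm.mpr h1
  calc A * Jmat n * Aᵀ = A * (Jmat n * Aᵀ * Jmat n) * Jmat n := by
        simp only [Matrix.mul_assoc, J_mul_J, Matrix.mul_one]
    _ = Jmat n := by rw [h2, Matrix.one_mul]

lemma row0 (A : Matrix (Fin (n+1)) (Fin (n+1)) ℝ)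
    (hA : Aᵀ * Jmat n * A = Jmat n) :
    ∑ j ∈ Finset.univ.erase (0 : Fin (n+1)), A 0 j * A 0 j = A 0 0 * A 0 0 - 1 := by
  have h := AJAT A hA
  have h00 : (A * Jmat n * Aᵀ) 0 0 = (Jmat n) 0 0 := by rw [h]
  unfold Jmat at h00
  rw [Matrix.mul_apply] at h00
  simp only [Matrix.mul_diagonal, Matrix.transpose_apply, Matrix.diagonal_apply_eq,
    if_pos rfl] at h00
  rw [← Finset.add_sum_erase Finset.univ _ (Finset.mem_univ (0 : Fin (n+1))),
    Finset.sum_congr rfl (fun i hi => by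
      rw [if_neg (Finset.mem_erase.mp hi).1, mul_one]),
    if_pos rfl] at h00
  simp only [if_true] at h00
  linear_combination h00

lemma sum_sq_eq (u : Fin (n+1) → ℝ) (hu : onH u) :
    ∑ i ∈ Finset.univ.erase (0 : Fin (n+1)), u i ^ 2 = u 0 ^ 2 - 1 := by
  have h := hu.1
  unfold lprod at h
  rw [Finset.sum_congr rfl (fun i _ => (pow_two (u i)))]
  nlinarith [h]

lemma one_le_head (u : Fin (n+1) → ℝ) (hu : onH u) : 1 ≤ u 0 := by
  have h := sum_sq_eq u hu
  have hnn : (0:ℝ) ≤ ∑ i ∈ Finset.univ.erase (0 : Fin (n+1)), u i ^ 2 :=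
    Finset.sum_nonneg fun i _ => sq_nonneg _
  nlinarith [hu.2]

lemma one_le_lprod (u x : Fin (n+1) → ℝ) (hu : onH u) (hx : onH x) : 1 ≤ lprod u x := by
  have hcs := Finset.sum_mul_sq_le_sq_mul_sq (Finset.univ.erase (0 : Fin (n+1))) u x
  rw [sum_sq_eq u hu, sum_sq_eq x hx] at hcs
  have h1 := one_le_head u hu
  have h2 := one_le_head x hx
  unfold lprod
  set T := ∑ i ∈ Finset.univ.erase (0 : Fin (n+1)), u i * x i with hT
  have h01 : (0:ℝ) ≤ u 0 * x 0 - 1 := by nlinarith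
  have hC : (u 0 ^ 2 - 1) * (x 0 ^ 2 - 1) ≤ (u 0 * x 0 - 1) ^ 2 := by
    nlinarith [sq_nonneg (u 0 - x 0)]
  have hT2 : T ^ 2 ≤ (u 0 * x 0 - 1) ^ 2 := le_trans hcs hC
  have : T ≤ u 0 * x 0 - 1 := by
    calc T ≤ |T| := le_abs_self _
      _ = Real.sqrt (T ^ 2) := (Real.sqrt_sq_eq_abs _).symm
      _ ≤ Real.sqrt ((u 0 * x 0 - 1) ^ 2) := Real.sqrt_le_sqrt hT2
      _ = |u 0 * x 0 - 1| := Real.sqrt_sq_eq_abs _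
      _ = u 0 * x 0 - 1 := abs_of_nonneg h01
  linarith

lemma orth_nonpos (v z : Fin (n+1) → ℝ) (hv : onH v) (hz : lprod v z = 0) :
    lprod z z ≤ 0 := by
  have hcs := Finset.sum_mul_sq_le_sq_mul_sq (Finset.univ.erase (0 : Fin (n+1))) v z
  rw [sum_sq_eq v hv] at hcs
  unfold lprod at hz ⊢
  have hz' : v 0 * z 0 = ∑ i ∈ Finset.univ.erase (0 : Fin (n+1)), v i * z i := by linarith
  have hS : (0:ℝ) ≤ ∑ i ∈ Finset.univ.erase (0 : Fin (n+1)), z i ^ 2 :=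
    Finset.sum_nonneg fun i _ => sq_nonneg _
  have hsq : ∑ i ∈ Finset.univ.erase (0 : Fin (n+1)), z i * z i
      = ∑ i ∈ Finset.univ.erase (0 : Fin (n+1)), z i ^ 2 :=
    Finset.sum_congr rfl fun i _ => (pow_two (z i)).symm
  rw [hsq]
  have hT2 : (v 0 * z 0) ^ 2
      ≤ (v 0 ^ 2 - 1) * ∑ i ∈ Finset.univ.erase (0 : Fin (n+1)), z i ^ 2 := by
    rw [hz']; exact hcs
  nlinarith [hT2, hS, mul_pos hv.2 hv.2]

lemma cs_orth (v p q : Fin (n+1) → ℝ) (hv : onH v)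
    (hp : lprod v p = 0) (hq : lprod v q = 0) :
    (lprod p q) ^ 2 ≤ lprod p p * lprod q q := by
  have hnn : ∀ t : ℝ, 0 ≤ (-(lprod q q)) * (t * t) + (-(2 * lprod p q)) * t + (-(lprod p p)) := by
    intro t
    have h0 : lprod v (fun i => p i + t * q i) = 0 := by
      rw [lprod_add_smul_right, hp, hq]; ring
    have h1 := orth_nonpos v _ hv h0
    rw [lprod_self_add_smul] at h1
    nlinarith [h1]
  have hd := discrim_le_zero hnn
  unfold discrim at hd
  nlinarith [hd]

lemma lprod_triangle (u v w : Fin (n+1) → ℝ) (hu : onH u) (hv : onH v) (hw : onH w)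
    {s t : ℝ} (hs : 0 ≤ s) (ht : 0 ≤ t)
    (h1 : lprod u v ≤ Real.cosh s) (h2 : lprod v w ≤ Real.cosh t) :
    lprod u w ≤ Real.cosh (s + t) := by
  have ha1 : 1 ≤ lprod u v := one_le_lprod u v hu hv
  have hb1 : 1 ≤ lprod v w := one_le_lprod v w hv hw
  have hp : lprod v (fun i => u i - lprod u v * v i) = 0 := by
    rw [show (fun i => u i - lprod u v * v i)
        = (fun i => u i + (-(lprod u v)) * v i) from funext fun i => by ring,
      lprod_add_smul_right, hv.1, lprod_symm v u]
    ring
  have hq : lprod v (fun i => w i - lprod v w * v i) = 0 := by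
    rw [show (fun i => w i - lprod v w * v i)
        = (fun i => w i + (-(lprod v w)) * v i) from funext fun i => by ring,
      lprod_add_smul_right, hv.1]
    ring
  have hpp : lprod (fun i => u i - lprod u v * v i) (fun i => u i - lprod u v * v i)
      = 1 - (lprod u v) ^ 2 := by
    rw [lprod_sub_smul, hu.1, hv.1, lprod_symm v u]; ring
  have hqq : lprod (fun i => w i - lprod v w * v i) (fun i => w i - lprod v w * v i)
      = 1 - (lprod v w) ^ 2 := by
    rw [lprod_sub_smul, hw.1, hv.1, lprod_symm w v]; ring
  have hpq : lprod (fun i => u i - lprod u v * v i) (fun i => w i - lprod v w * v i)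
      = lprod u w - lprod u v * lprod v w := by
    rw [lprod_sub_smul, hv.1]; ring
  have hcs := cs_orth v _ _ hv hp hq
  rw [hpp, hqq, hpq] at hcs
  have hsa : Real.sqrt ((lprod u v) ^ 2 - 1) ≤ Real.sinh s := by
    rw [show Real.sinh s = Real.sqrt ((Real.sinh s) ^ 2) from
      (Real.sqrt_sq (Real.sinh_nonneg_iff.mpr hs)).symm]
    apply Real.sqrt_le_sqrt
    nlinarith [Real.cosh_sq s, h1, ha1]
  have hsb : Real.sqrt ((lprod v w) ^ 2 - 1) ≤ Real.sinh t := by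
    rw [show Real.sinh t = Real.sqrt ((Real.sinh t) ^ 2) from
      (Real.sqrt_sq (Real.sinh_nonneg_iff.mpr ht)).symm]
    apply Real.sqrt_le_sqrt
    nlinarith [Real.cosh_sq t, h2, hb1]
  have ha0 : (0:ℝ) ≤ (lprod u v) ^ 2 - 1 := by nlinarith
  have hb0 : (0:ℝ) ≤ (lprod v w) ^ 2 - 1 := by nlinarith
  have hX : lprod u w - lprod u v * lprod v w
      ≤ Real.sqrt ((lprod u v) ^ 2 - 1) * Real.sqrt ((lprod v w) ^ 2 - 1) := by
    have h3 : (lprod u w - lprod u v * lprod v w) ^ 2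
        ≤ (Real.sqrt ((lprod u v) ^ 2 - 1) * Real.sqrt ((lprod v w) ^ 2 - 1)) ^ 2 := by
      rw [mul_pow, Real.sq_sqrt ha0, Real.sq_sqrt hb0]
      nlinarith [hcs]
    calc lprod u w - lprod u v * lprod v w
        ≤ |lprod u w - lprod u v * lprod v w| := le_abs_self _
      _ = Real.sqrt ((lprod u w - lprod u v * lprod v w) ^ 2) := (Real.sqrt_sq_eq_abs _).symm
      _ ≤ Real.sqrt ((Real.sqrt ((lprod u v) ^ 2 - 1) * Real.sqrt ((lprod v w) ^ 2 - 1)) ^ 2) :=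
          Real.sqrt_le_sqrt h3
      _ = |Real.sqrt ((lprod u v) ^ 2 - 1) * Real.sqrt ((lprod v w) ^ 2 - 1)| :=
          Real.sqrt_sq_eq_abs _
      _ = Real.sqrt ((lprod u v) ^ 2 - 1) * Real.sqrt ((lprod v w) ^ 2 - 1) :=
          abs_of_nonneg (mul_nonneg (Real.sqrt_nonneg _) (Real.sqrt_nonneg _))
  rw [Real.cosh_add]
  have hab : lprod u v * lprod v w ≤ Real.cosh s * Real.cosh t :=
    mul_le_mul h1 h2 (by linarith) (le_trans (by norm_num) (Real.one_le_cosh s))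
  have hst : Real.sqrt ((lprod u v) ^ 2 - 1) * Real.sqrt ((lprod v w) ^ 2 - 1)
      ≤ Real.sinh s * Real.sinh t :=
    mul_le_mul hsa hsb (Real.sqrt_nonneg _) (Real.sinh_nonneg_iff.mpr hs)
  linarith

lemma le_cosh_of_arcosh_le {c R : ℝ} (hc : 1 ≤ c) (hR : 0 ≤ R) (h : arcosh c ≤ R) :
    c ≤ Real.cosh R := by
  have h1 : (0:ℝ) ≤ c ^ 2 - 1 := by nlinarith
  have hs := Real.sq_sqrt h1
  have hsn := Real.sqrt_nonneg (c ^ 2 - 1)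
  have hy : (1:ℝ) ≤ c + Real.sqrt (c ^ 2 - 1) := by linarith
  have hy0 : (0:ℝ) < c + Real.sqrt (c ^ 2 - 1) := by linarith
  have hcosh : Real.cosh (arcosh c) = c := by
    unfold arcosh
    rw [Real.cosh_eq, Real.exp_log hy0, Real.exp_neg, Real.exp_log hy0]
    field_simp
    nlinarith [hs]
  have hnn : 0 ≤ arcosh c := Real.log_nonneg hy
  calc c = Real.cosh (arcosh c) := hcosh.symm
    _ ≤ Real.cosh R := by
        rw [Real.cosh_le_cosh, abs_of_nonneg hnn, abs_of_nonneg hR]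
        exact h

lemma abs_entry_le_head (y : Fin (n+1) → ℝ) (hy : onH y) (i : Fin (n+1)) :
    |y i| ≤ y 0 := by
  by_cases h : i = 0
  · subst h; rw [abs_of_pos hy.2]
  · have hsum := sum_sq_eq y hy
    have hle : y i ^ 2 ≤ y 0 ^ 2 - 1 := by
      rw [← hsum]
      exact Finset.single_le_sum (fun k _ => sq_nonneg (y k))
        (Finset.mem_erase.mpr ⟨h, Finset.mem_univ i⟩)
    calc |y i| = Real.sqrt (y i ^ 2) := (Real.sqrt_sq_eq_abs _).symm
      _ ≤ Real.sqrt (y 0 ^ 2) := Real.sqrt_le_sqrt (by linarith)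
      _ = |y 0| := Real.sqrt_sq_eq_abs _
      _ = y 0 := abs_of_pos hy.2

lemma lprod_e1 (x : Fin (n+1) → ℝ) : lprod (e1vec n) x = x 0 := by
  unfold lprod e1vec
  rw [if_pos rfl, one_mul,
    Finset.sum_congr rfl (fun i hi => by
      rw [if_neg (Finset.mem_erase.mp hi).1, zero_mul]),
    Finset.sum_const_zero]
  ring

lemma onH_e1 : onH (e1vec n) := by
  constructor
  · rw [lprod_e1]; unfold e1vec; rw [if_pos rfl]
  · unfold e1vec; rw [if_pos rfl]; norm_num

lemma rowvec_onH (A : Matrix (Fin (n+1)) (Fin (n+1)) ℝ) (hA : OPlus A) :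
    onH (fun j => if j = 0 then A 0 0 else -(A 0 j)) := by
  constructor
  · unfold lprod
    beta_reduce
    rw [if_pos rfl,
      Finset.sum_congr rfl (fun i hi => by
        rw [if_neg (Finset.mem_erase.mp hi).1, neg_mul_neg]),
      row0 A hA.1]
    ring
  · beta_reduce; rw [if_pos rfl]; linarith [hA.2]

lemma mulVec_head (A : Matrix (Fin (n+1)) (Fin (n+1)) ℝ) (x : Fin (n+1) → ℝ) :
    (A.mulVec x) 0 = lprod (fun j => if j = 0 then A 0 0 else -(A 0 j)) x := by
  unfold lprod
  beta_reduce
  rw [if_pos rfl]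
  rw [Matrix.mulVec, dotProduct,
    ← Finset.add_sum_erase Finset.univ _ (Finset.mem_univ (0 : Fin (n+1)))]
  rw [Finset.sum_congr rfl (fun i hi => (by
    rw [if_neg (Finset.mem_erase.mp hi).1] :
    (if i = 0 then A 0 0 else -(A 0 i)) * x i = -(A 0 i) * x i))]
  rw [Finset.sum_congr rfl (fun i _ => (by ring : -(A 0 i) * x i = -(A 0 i * x i))),
    Finset.sum_neg_distrib]
  ring

lemma onH_mulVec (A : Matrix (Fin (n+1)) (Fin (n+1)) ℝ) (hA : OPlus A)
    (x : Fin (n+1) → ℝ) (hx : onH x) : onH (A.mulVec x) := by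
  constructor
  · rw [lprod_mulVec A hA.1, hx.1]
  · rw [mulVec_head]
    have := one_le_lprod _ x (rowvec_onH A hA) hx
    linarith

end auxLemmas

theorem stmt_14 (n : ℕ) (r : ℝ) (hr : 0 < r)
    (A : Matrix (Fin (n+1)) (Fin (n+1)) ℝ) (hA : OPlus A)
    (hmeet : ∃ x ∈ hBall n r, A.mulVec x ∈ hBall n r) :
    ∀ i j, |A i j| ≤ kappa r := by
  obtain ⟨x, hxB, hAxB⟩ := hmeet
  obtain ⟨hxH, hxd⟩ := hxB
  obtain ⟨hAxH, hAxd⟩ := hAxB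
  have he1 : onH (e1vec n) := onH_e1
  have hAxH' : onH (A.mulVec x) := onH_mulVec A hA x hxH
  have hx1 : 1 ≤ x 0 := by
    have := one_le_lprod (e1vec n) x he1 hxH
    rwa [lprod_e1] at this
  have hAx1 : 1 ≤ (A.mulVec x) 0 := by
    have := one_le_lprod (e1vec n) _ he1 hAxH'
    rwa [lprod_e1] at this
  have hx0 : x 0 ≤ Real.cosh r := by
    unfold dH at hxd
    rw [lprod_e1] at hxd
    exact le_cosh_of_arcosh_le hx1 hr.le hxd
  have hAx0 : (A.mulVec x) 0 ≤ Real.cosh r := by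
    unfold dH at hAxd
    rw [lprod_e1] at hAxd
    exact le_cosh_of_arcosh_le hAx1 hr.le hAxd
  have main : ∀ p, onH p → lprod (e1vec n) p ≤ Real.cosh r →
      ∀ i, |(A.mulVec p) i| ≤ Real.cosh (3*r) := by
    intro p hp hpr
    have h1 : lprod x (e1vec n) ≤ Real.cosh r := by
      rw [lprod_symm, lprod_e1]; exact hx0
    have h2 : lprod x p ≤ Real.cosh (r + r) :=
      lprod_triangle x (e1vec n) p hxH he1 hp hr.le hr.le h1 hpr
    have h3 : lprod (A.mulVec x) (A.mulVec p) ≤ Real.cosh (r+r) := by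
      rw [lprod_mulVec A hA.1]; exact h2
    have h4 : lprod (e1vec n) (A.mulVec x) ≤ Real.cosh r := by
      rw [lprod_e1]; exact hAx0
    have h5 := lprod_triangle (e1vec n) (A.mulVec x) (A.mulVec p) he1 hAxH'
      (onH_mulVec A hA p hp) hr.le (by linarith) h4 h3
    rw [lprod_e1] at h5
    have h6 : (A.mulVec p) 0 ≤ Real.cosh (3*r) := by
      rw [show (3:ℝ)*r = r + (r+r) by ring]; exact h5
    intro i
    exact le_trans (abs_entry_le_head _ (onH_mulVec A hA p hp) i) h6
  have hC : Real.cosh (3*r) ≤ Real.sqrt (Real.cosh (6*r)) := by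
    have h6r : Real.cosh (6*r) = Real.cosh (3*r)^2 + Real.sinh (3*r)^2 := by
      rw [show (6:ℝ)*r = 2*(3*r) by ring, Real.cosh_two_mul]
    calc Real.cosh (3*r) = Real.sqrt ((Real.cosh (3*r))^2) :=
        (Real.sqrt_sq (le_of_lt (Real.cosh_pos _))).symm
      _ ≤ Real.sqrt (Real.cosh (6*r)) :=
        Real.sqrt_le_sqrt (by nlinarith [sq_nonneg (Real.sinh (3*r))])
  have he1single : e1vec n = Pi.single (0 : Fin (n+1)) (1:ℝ) := funext fun i => by
    simp [e1vec, Pi.single_apply]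
  have hcol0 : ∀ i, |A i 0| ≤ Real.cosh (3*r) := by
    intro i
    have h := main (e1vec n) he1 (by
      rw [lprod_e1]; unfold e1vec; rw [if_pos rfl]; exact Real.one_le_cosh r) i
    simp only [he1single, Matrix.mulVec_single, mul_one] at h
    simpa using h
  have hsinh : 0 < Real.sinh r := Real.sinh_pos_iff.mpr hr
  have hcosh1 : (1:ℝ) ≤ Real.cosh r := Real.one_le_cosh r
  have hsc : Real.sinh r ≤ 1 + Real.cosh r := by
    nlinarith [Real.cosh_sq r, Real.sinh_nonneg_iff.mpr hr.le]
  have hsqrtnn : 0 ≤ Real.sqrt (Real.cosh (6*r)) := Real.sqrt_nonneg _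
  intro i j
  by_cases hj : j = 0
  · subst hj
    calc |A i 0| ≤ Real.cosh (3*r) := hcol0 i
      _ ≤ Real.sqrt (Real.cosh (6*r)) := hC
      _ = 1 * Real.sqrt (Real.cosh (6*r)) := (one_mul _).symm
      _ ≤ kappa r := by
          unfold kappa
          apply mul_le_mul_of_nonneg_right _ hsqrtnn
          rw [le_div_iff₀ hsinh, one_mul]
          exact hsc
  · set p : Fin (n+1) → ℝ :=
      fun k => if k = 0 then Real.cosh r else if k = j then Real.sinh r else 0 with hpdef
    have hp0 : p 0 = Real.cosh r := by rw [hpdef]; simp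
    have hpj : p j = Real.sinh r := by rw [hpdef]; simp [hj]
    have hpz : ∀ k, k ≠ 0 → k ≠ j → p k = 0 := by
      intro k hk0 hkj
      rw [hpdef]; simp [hk0, hkj]
    have hponH : onH p := by
      constructor
      · unfold lprod
        have hsum : ∑ k ∈ Finset.univ.erase (0:Fin (n+1)), p k * p k
            = Real.sinh r * Real.sinh r := by
          rw [Finset.sum_eq_single_of_mem j
            (Finset.mem_erase.mpr ⟨hj, Finset.mem_univ j⟩)
            (fun k hk hkj => by rw [hpz k (Finset.mem_erase.mp hk).1 hkj, mul_zero]), hpj]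
        rw [hp0, hsum]
        nlinarith [Real.cosh_sq_sub_sinh_sq r]
      · rw [hp0]; exact Real.cosh_pos _
    have hpe1 : lprod (e1vec n) p ≤ Real.cosh r := by
      rw [lprod_e1, hp0]

    have hcombo : (A.mulVec p) i = Real.cosh r * A i 0 + Real.sinh r * A i j := by
      rw [Matrix.mulVec, dotProduct,
        ← Finset.add_sum_erase Finset.univ _ (Finset.mem_univ (0:Fin (n+1))),
        Finset.sum_eq_single_of_mem j
          (Finset.mem_erase.mpr ⟨hj, Finset.mem_univ j⟩)
          (fun k hk hkj => by rw [hpz k (Finset.mem_erase.mp hk).1 hkj, mul_zero]),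
        hp0, hpj]
      ring
    have hcb := main p hponH hpe1 i
    rw [hcombo] at hcb
    have h7 : Real.sinh r * |A i j| ≤ (1 + Real.cosh r) * Real.sqrt (Real.cosh (6*r)) := by
      have hsplit : Real.sinh r * A i j
          = (Real.cosh r * A i 0 + Real.sinh r * A i j) - Real.cosh r * A i 0 := by ring
      calc Real.sinh r * |A i j| = |Real.sinh r * A i j| := by
            rw [abs_mul, abs_of_pos hsinh]
        _ ≤ |Real.cosh r * A i 0 + Real.sinh r * A i j| + |Real.cosh r * A i 0| := by
            have htri := abs_add_le (Real.cosh r * A i 0 + Real.sinh r * A i j)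
              (-(Real.cosh r * A i 0))
            rw [abs_neg] at htri
            have heq : Real.sinh r * A i j
                = (Real.cosh r * A i 0 + Real.sinh r * A i j) + -(Real.cosh r * A i 0) := by
              ring
            conv_lhs => rw [heq]
            exact htri
        _ ≤ Real.cosh (3*r) + Real.cosh r * Real.cosh (3*r) := by
            have h8 : |Real.cosh r * A i 0| = Real.cosh r * |A i 0| := by
              rw [abs_mul, abs_of_pos (Real.cosh_pos _)]
            rw [h8]
            have h9 := mul_le_mul_of_nonneg_left (hcol0 i)
              (le_of_lt (Real.cosh_pos (x := r)))
            linarith [hcb]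
        _ ≤ (1 + Real.cosh r) * Real.sqrt (Real.cosh (6*r)) := by
            nlinarith [hC, hcosh1, hsqrtnn]
    unfold kappa
    rw [div_mul_eq_mul_div, le_div_iff₀ hsinh]
    calc |A i j| * Real.sinh r = Real.sinh r * |A i j| := by ring
      _ ≤ _ := h7
end
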